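/- Let Φ = (a_n)_{n∈ℤ} be a random formal Fourier series with independent and symmetric coefficients. If the set of ω ∈ Ω for which there exists an open interval I ⊆ 𝕊¹ (possibly depending on ω) with Φ(ω) ∈ P(I) is not ℙ-null (i.e. has positive outer measure), then Φ(ω) ∈ P(𝕊¹) for ℙ-almost all ω ∈ Ω (note that 𝕊¹ itself is an open interval in the sense below). -/

import Mathlib

open MeasureTheory ProbabilityTheory Filter

open Set in
private lemma kahane_arc_open (α β : ℝ) :
    IsOpen (((↑) : ℝ → AddCircle (2 * Real.pi)) '' Ioo α β) :=
  QuotientAddGroup.isOpenMap_coe _ isOpen_Ioo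

open Set in
private lemma kahane_arc_conn {α β : ℝ} (h : α < β) :
    IsConnected (((↑) : ℝ → AddCircle (2 * Real.pi)) '' Ioo α β) :=
  (isConnected_Ioo h).image _ (AddCircle.continuous_mk' _).continuousOn

open Set in
private lemma kahane_univ_conn : IsConnected (Set.univ : Set (AddCircle (2 * Real.pi))) := by
  rw [← Set.range_eq_univ.mpr (QuotientAddGroup.mk_surjective (α := ℝ))]
  exact isConnected_range (AddCircle.continuous_mk' _)

open Set in
/-- joint law of finitely many independent coordinates is the product of the marginals -/
private lemma kahane_map_restrict_eq_pi {Ω : Type*} [MeasurableSpace Ω] (P : Measure Ω)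
    [IsProbabilityMeasure P] (a : ℤ → Ω → ℂ) (hmeas : ∀ n, Measurable (a n))
    (hindep : iIndepFun a P) (s : Finset ℤ) :
    Measure.map (fun ω (i : s) => a i ω) P
      = Measure.pi (fun i : s => Measure.map (a (i : ℤ)) P) := by
  classical
  haveI : ∀ i : s, IsProbabilityMeasure (Measure.map (a (i : ℤ)) P) :=
    fun i => Measure.isProbabilityMeasure_map (hmeas _).aemeasurable
  have hF : Measurable (fun ω (i : s) => a i ω) :=
    measurable_pi_lambda _ fun i => hmeas _
  refine (Measure.pi_eq fun t ht => ?_).symm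
  rw [Measure.map_apply hF (MeasurableSet.univ_pi ht)]
  set t' : ℤ → Set ℂ := fun n => if h : n ∈ s then t ⟨n, h⟩ else univ with ht'
  have ht'm : ∀ n, MeasurableSet (t' n) := by
    intro n
    simp only [ht']
    split
    · exact ht _
    · exact MeasurableSet.univ
  have hpre : (fun ω (i : s) => a i ω) ⁻¹' (univ.pi t) = ⋂ n ∈ s, a n ⁻¹' t' n := by
    ext ω
    simp only [mem_preimage, Set.mem_pi, mem_univ, forall_true_left, mem_iInter, ht']
    constructor
    · intro h n hn
      simpa [dif_pos hn] using h ⟨n, hn⟩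
    · intro h i
      have := h i i.2
      simpa [dif_pos i.2] using this
  rw [hpre, hindep.meas_biInter (fun n hn => ⟨t' n, ht'm n, rfl⟩),
    ← Finset.prod_coe_sort s (fun n => P (a n ⁻¹' t' n))]
  refine Finset.prod_congr rfl fun i _ => ?_
  rw [Measure.map_apply (hmeas _) (ht i)]
  congr 1
  simp only [ht', dif_pos i.2]

open Set in
/-- two independent families with identical marginals have identical joint laws -/
private lemma kahane_map_eq {Ω : Type*} [MeasurableSpace Ω] (P : Measure Ω)
    [IsProbabilityMeasure P] (a b : ℤ → Ω → ℂ) (hameas : ∀ n, Measurable (a n))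
    (hbmeas : ∀ n, Measurable (b n))
    (haindep : iIndepFun a P)
    (hbindep : iIndepFun b P)
    (hmarg : ∀ n, Measure.map (a n) P = Measure.map (b n) P) :
    Measure.map (fun ω (n : ℤ) => a n ω) P = Measure.map (fun ω (n : ℤ) => b n ω) P := by
  have hFa : Measurable (fun ω (n : ℤ) => a n ω) := measurable_pi_lambda _ hameas
  have hFb : Measurable (fun ω (n : ℤ) => b n ω) := measurable_pi_lambda _ hbmeas
  haveI : IsProbabilityMeasure (Measure.map (fun ω (n : ℤ) => a n ω) P) :=
    Measure.isProbabilityMeasure_map hFa.aemeasurable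
  haveI : IsProbabilityMeasure (Measure.map (fun ω (n : ℤ) => b n ω) P) :=
    Measure.isProbabilityMeasure_map hFb.aemeasurable
  refine ext_of_generate_finite _ generateFrom_measurableCylinders.symm
    isPiSystem_measurableCylinders (fun t ht => ?_) (by simp)
  obtain ⟨s, S, hS, rfl⟩ := (mem_measurableCylinders t).mp ht
  have hcyl : ∀ (c : ℤ → Ω → ℂ),
      (fun ω (n : ℤ) => c n ω) ⁻¹' (cylinder (α := fun _ : ℤ => ℂ) s S)
        = (fun ω (i : s) => c i ω) ⁻¹' S := by
    intro c; rfl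
  have hSm : MeasurableSet (cylinder (α := fun _ : ℤ => ℂ) s S) := hS.cylinder
  rw [Measure.map_apply hFa hSm, Measure.map_apply hFb hSm, hcyl, hcyl,
    ← Measure.map_apply (measurable_pi_lambda _ fun i => hameas _) hS,
    ← Measure.map_apply (measurable_pi_lambda _ fun i => hbmeas _) hS,
    kahane_map_restrict_eq_pi P a hameas haindep s,
    kahane_map_restrict_eq_pi P b hbmeas hbindep s]
  have : (fun i : s => Measure.map (a (i:ℤ)) P) = fun i : s => Measure.map (b (i:ℤ)) P :=
    funext fun i => hmarg i
  rw [this]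

open Set in
/-- a sequence supported on a residue class `r mod k` which satisfies `Pr` on an arc of length
`> 2π/k` satisfies `Pr` on the whole circle. -/
private lemma kahane_resclass
    (Pr : Set (AddCircle (2 * Real.pi)) → Set (ℤ → ℂ))
    (hsmul : ∀ I, IsOpen I → IsConnected I →
      ∀ (c : ℂ) (f : ℤ → ℂ), f ∈ Pr I → c • f ∈ Pr I)
    (hcover : ∀ I₀ I₁ I₂, IsOpen I₀ → IsConnected I₀ → IsOpen I₁ → IsConnected I₁ →
      IsOpen I₂ → IsConnected I₂ → I₀ ⊆ I₁ ∪ I₂ → Pr I₁ ∩ Pr I₂ ⊆ Pr I₀)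
    (hrot : ∀ I, IsOpen I → IsConnected I → ∀ (θ₀ : ℝ) (f : ℤ → ℂ), f ∈ Pr I →
      (fun n : ℤ => f n * Complex.exp (Complex.I * n * θ₀))
        ∈ Pr ((fun x => x + (θ₀ : AddCircle (2 * Real.pi))) '' I))
    {α β : ℝ} (hαβ : α < β) (k : ℕ) (hk : 0 < k) (hθ : 2 * Real.pi / k < β - α)
    (r : ℤ) (f : ℤ → ℂ) (hf : ∀ n, f n ≠ 0 → (k:ℤ) ∣ (n - r))
    (hmem : f ∈ Pr (((↑) : ℝ → AddCircle (2 * Real.pi)) '' Ioo α β)) : f ∈ Pr univ := by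
  set θ : ℝ := 2 * Real.pi / k with hθdef
  have hπ : (0:ℝ) < 2 * Real.pi := by positivity
  have hθpos : 0 < θ := by positivity
  have hk0 : (k:ℝ) ≠ 0 := Nat.cast_ne_zero.mpr hk.ne'
  have hkθ : (k:ℝ) * θ = 2 * Real.pi := by rw [hθdef]; field_simp
  -- single rotation step
  have step : ∀ γ ζ : ℝ, γ < ζ →
      f ∈ Pr (((↑) : ℝ → AddCircle (2 * Real.pi)) '' Ioo γ ζ) →
      f ∈ Pr (((↑) : ℝ → AddCircle (2 * Real.pi)) '' Ioo (γ + θ) (ζ + θ)) := by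
    intro γ ζ hγζ hfm
    have h1 := hrot _ (kahane_arc_open γ ζ) (kahane_arc_conn hγζ) θ f hfm
    have himg : (fun x => x + (θ : AddCircle (2 * Real.pi)))
          '' (((↑) : ℝ → AddCircle (2 * Real.pi)) '' Ioo γ ζ)
        = ((↑) : ℝ → AddCircle (2 * Real.pi)) '' Ioo (γ + θ) (ζ + θ) := by
      rw [image_image, ← image_add_const_Ioo θ γ ζ, image_image]
      exact image_congr fun x _ => rfl
    rw [himg] at h1
    have hrotval : (fun n : ℤ => f n * Complex.exp (Complex.I * n * θ))
        = Complex.exp (Complex.I * r * θ) • f := by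
      funext n
      by_cases hn : f n = 0
      · simp [hn]
      · obtain ⟨m, hm⟩ := hf n hn
        have hnr : (n:ℂ) - r = (k:ℂ) * m := by exact_mod_cast hm
        have hθck : (θ:ℂ) * k = 2 * Real.pi := by
          calc (θ:ℂ) * k = (((k:ℝ) * θ : ℝ) : ℂ) := by push_cast; ring
          _ = ((2 * Real.pi : ℝ) : ℂ) := by rw [hkθ]
          _ = 2 * Real.pi := by push_cast; ring
        have hdiff : Complex.I * n * θ - Complex.I * r * θ
            = m * (2 * Real.pi * Complex.I) := by
          have h2 : Complex.I * n * θ - Complex.I * r * θ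
              = Complex.I * ((n:ℂ) - r) * θ := by ring
          rw [h2, hnr]
          calc Complex.I * ((k:ℂ) * m) * θ = (m:ℂ) * ((θ:ℂ) * k) * Complex.I := by ring
          _ = m * (2 * Real.pi * Complex.I) := by rw [hθck]; ring
        have hsplit : Complex.I * n * θ
            = Complex.I * r * θ + m * (2 * Real.pi * Complex.I) := by
          linear_combination hdiff
        rw [hsplit, Complex.exp_add, Complex.exp_int_mul_two_pi_mul_I, mul_one]
        simp [mul_comm]
    rw [hrotval] at h1
    have := hsmul _ (kahane_arc_open _ _) (kahane_arc_conn (by linarith))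
      (Complex.exp (Complex.I * r * θ))⁻¹ _ h1
    rwa [inv_smul_smul₀ (Complex.exp_ne_zero _) f] at this
  -- iterate the step
  have iter : ∀ j : ℕ,
      f ∈ Pr (((↑) : ℝ → AddCircle (2 * Real.pi)) '' Ioo (α + j * θ) (β + j * θ)) := by
    intro j
    induction j with
    | zero => simpa using hmem
    | succ j ih =>
        have := step _ _ (by linarith) ih
        have harg : α + j * θ + θ = α + (j + 1 : ℕ) * θ := by push_cast; ring
        have harg2 : β + j * θ + θ = β + (j + 1 : ℕ) * θ := by push_cast; ring
        rwa [harg, harg2] at this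
  -- grow the interval
  have grow : ∀ j : ℕ,
      f ∈ Pr (((↑) : ℝ → AddCircle (2 * Real.pi)) '' Ioo α (β + j * θ)) := by
    intro j
    induction j with
    | zero => simpa using hmem
    | succ j ih =>
        have hjθ : (0:ℝ) ≤ j * θ := by positivity
        have hsub : Ioo α (β + (j+1:ℕ) * θ)
            ⊆ Ioo α (β + j * θ) ∪ Ioo (α + (j+1:ℕ) * θ) (β + (j+1:ℕ) * θ) := by
          intro t ht
          rcases lt_or_ge t (β + j * θ) with h | h
          · exact Or.inl ⟨ht.1, h⟩
          · refine Or.inr ⟨?_, ht.2⟩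
            push_cast at h ⊢
            nlinarith [hθ]
        have hsub' : ((↑) : ℝ → AddCircle (2 * Real.pi)) '' Ioo α (β + (j+1:ℕ) * θ)
            ⊆ (((↑) : ℝ → AddCircle (2 * Real.pi)) '' Ioo α (β + j * θ))
              ∪ (((↑) : ℝ → AddCircle (2 * Real.pi))
                  '' Ioo (α + (j+1:ℕ) * θ) (β + (j+1:ℕ) * θ)) := by
          rw [← image_union]
          exact image_mono hsub
        refine hcover _ _ _ (kahane_arc_open _ _) (kahane_arc_conn (by push_cast; nlinarith))
          (kahane_arc_open _ _) (kahane_arc_conn (by nlinarith)) (kahane_arc_open _ _)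
          (kahane_arc_conn (by linarith)) hsub' ⟨ih, iter (j+1)⟩
  -- at j = k the arc covers the circle
  have hcov : (univ : Set (AddCircle (2 * Real.pi)))
      ⊆ ((↑) : ℝ → AddCircle (2 * Real.pi)) '' Ioo α (β + k * θ) := by
    intro y _
    have hβk : β + (k:ℝ) * θ = β + 2 * Real.pi := by rw [hkθ]
    obtain ⟨t, hty, htmem⟩ : ∃ t : ℝ, (t : AddCircle (2 * Real.pi)) = y
        ∧ t ∈ Ico β (β + 2 * Real.pi) := by
      refine ⟨((QuotientAddGroup.equivIcoMod hπ β) y : ℝ), ?_,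
        ((QuotientAddGroup.equivIcoMod hπ β) y).2⟩
      exact (QuotientAddGroup.equivIcoMod hπ β).symm_apply_apply y
    exact ⟨t, ⟨lt_of_lt_of_le hαβ htmem.1, by rw [hβk]; exact htmem.2⟩, hty⟩
  have huniv : ((↑) : ℝ → AddCircle (2 * Real.pi)) '' Ioo α (β + k * θ) = univ :=
    eq_univ_of_univ_subset hcov
  have := grow k
  rwa [huniv] at this

/-- Kahane-type local-to-global principle for random formal Fourier series on the circle
`𝕊¹ = ℝ/2πℤ`: identify formal Fourier series with their coefficient sequences in `ℂ^ℤ`.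
Given Borel "regularity properties" `P(I) ⊆ ℂ^ℤ` indexed by open intervals `I ⊆ 𝕊¹`
satisfying (i) `P(I)` is a subspace containing all finitely supported sequences,
(ii) `P(I₀) ⊇ P(I₁) ∩ P(I₂)` whenever `I₀ ⊆ I₁ ∪ I₂`, (iii) rotation covariance, and
(iv) invariance under the coefficient shifts (multiplication by `e^{±iθ}`), any random
formal Fourier series with independent symmetric coefficients which satisfies `P(I)` for
some (random) open interval with positive outer probability satisfies `P(𝕊¹)` almost
surely. -/
theorem kahane_local_to_global
    {Ω : Type*} [MeasurableSpace Ω] (P : Measure Ω) [IsProbabilityMeasure P]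
    (a : ℤ → Ω → ℂ) (hmeas : ∀ n, Measurable (a n))
    (hindep : iIndepFun a P)
    (hsymm : ∀ n, Measure.map (a n) P = Measure.map (fun ω => -(a n ω)) P)
    (Pr : Set (AddCircle (2 * Real.pi)) → Set (ℤ → ℂ))
    -- (v) each `Pr I` is Borel
    (hBorel : ∀ I, IsOpen I → IsConnected I → MeasurableSet (Pr I))
    -- (i) `Pr I` is a subspace containing all finitely supported sequences
    (hadd : ∀ I, IsOpen I → IsConnected I →
      ∀ f g : ℤ → ℂ, f ∈ Pr I → g ∈ Pr I → f + g ∈ Pr I)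
    (hsmul : ∀ I, IsOpen I → IsConnected I →
      ∀ (c : ℂ) (f : ℤ → ℂ), f ∈ Pr I → c • f ∈ Pr I)
    (hfin : ∀ I, IsOpen I → IsConnected I →
      ∀ f : ℤ → ℂ, (Function.support f).Finite → f ∈ Pr I)
    -- (ii) covering monotonicity
    (hcover : ∀ I₀ I₁ I₂, IsOpen I₀ → IsConnected I₀ → IsOpen I₁ → IsConnected I₁ →
      IsOpen I₂ → IsConnected I₂ → I₀ ⊆ I₁ ∪ I₂ → Pr I₁ ∩ Pr I₂ ⊆ Pr I₀)
    -- (iii) rotation covariance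
    (hrot : ∀ I, IsOpen I → IsConnected I → ∀ (θ₀ : ℝ) (f : ℤ → ℂ), f ∈ Pr I →
      (fun n : ℤ => f n * Complex.exp (Complex.I * n * θ₀))
        ∈ Pr ((fun x => x + (θ₀ : AddCircle (2 * Real.pi))) '' I))
    -- (iv) shift invariance
    (hshift : ∀ I, IsOpen I → IsConnected I → ∀ f : ℤ → ℂ, f ∈ Pr I →
      (fun n : ℤ => f (n - 1)) ∈ Pr I ∧ (fun n : ℤ => f (n + 1)) ∈ Pr I)
    -- positive outer probability of local regularity
    (hpos : P {ω | ∃ I : Set (AddCircle (2 * Real.pi)),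
        IsOpen I ∧ IsConnected I ∧ (fun n => a n ω) ∈ Pr I} ≠ 0) :
    ∀ᵐ ω ∂P, (fun n => a n ω) ∈ Pr Set.univ := by
  classical
  have hπ : (0:ℝ) < 2 * Real.pi := by positivity
  -- stability of `Pr I` under finitely supported modifications
  have hstable : ∀ I, IsOpen I → IsConnected I → ∀ f g : ℤ → ℂ,
      (Function.support (fun n => g n - f n)).Finite → f ∈ Pr I → g ∈ Pr I := by
    intro I hIo hIc f g hsupp hfI
    have := hadd I hIo hIc f (fun n => g n - f n) hfI (hfin I hIo hIc _ hsupp)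
    have heq : (f + fun n => g n - f n) = g := by funext n; simp
    rwa [heq] at this
  -- the countable family of rational arcs
  set arc : ℚ × ℚ → Set (AddCircle (2 * Real.pi)) :=
    fun q => ((↑) : ℝ → AddCircle (2 * Real.pi)) '' Set.Ioo (q.1 : ℝ) ((q.1 : ℝ) + (q.2 : ℝ))
    with harc
  set G : Set (ℚ × ℚ) := {q | 0 < q.2} with hG
  -- selection of a fixed rational arc with positive outer probability
  have hsel : ∃ q ∈ G, P {ω | (fun n => a n ω) ∈ Pr (arc q)} ≠ 0 := by
    by_contra hcon
    push_neg at hcon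
    have hsubset : {ω | ∃ I : Set (AddCircle (2 * Real.pi)),
        IsOpen I ∧ IsConnected I ∧ (fun n => a n ω) ∈ Pr I}
        ⊆ ⋃ q ∈ G, {ω | (fun n => a n ω) ∈ Pr (arc q)} := by
      rintro ω ⟨I, hIo, hIc, hmem⟩
      obtain ⟨y, hy⟩ := hIc.nonempty
      obtain ⟨x, rfl⟩ := QuotientAddGroup.mk_surjective y
      have hUo : IsOpen (((↑) : ℝ → AddCircle (2 * Real.pi)) ⁻¹' I) :=
        hIo.preimage (AddCircle.continuous_mk' _)
      obtain ⟨δ, hδpos, hball⟩ := Metric.isOpen_iff.mp hUo x hy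
      rw [Real.ball_eq_Ioo] at hball
      obtain ⟨q1, hq1⟩ := exists_rat_btwn (show x - δ < x by linarith)
      obtain ⟨q2, hq2⟩ := exists_rat_btwn (show x < x + δ by linarith)
      have hq12 : q1 < q2 := by
        have : (q1:ℝ) < (q2:ℝ) := lt_trans hq1.2 hq2.1
        exact_mod_cast this
      refine Set.mem_biUnion (show (q1, q2 - q1) ∈ G from by
        simp only [hG, Set.mem_setOf_eq]; exact sub_pos.mpr hq12) ?_
      have harceq : arc (q1, q2 - q1)
          = ((↑) : ℝ → AddCircle (2 * Real.pi)) '' Set.Ioo (q1:ℝ) (q2:ℝ) := by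
        simp only [harc]
        congr 2
        push_cast
        ring
      have harcsub : arc (q1, q2 - q1) ⊆ I := by
        rw [harceq]
        refine Set.image_subset_iff.mpr ?_
        intro t ht
        exact hball ⟨lt_trans hq1.1 ht.1, lt_trans ht.2 hq2.2⟩
      refine hcover _ I I ?_ ?_ hIo hIc hIo hIc
        (by rw [Set.union_self]; exact harcsub) ⟨hmem, hmem⟩
      · rw [harceq]; exact kahane_arc_open _ _
      · rw [harceq]
        exact kahane_arc_conn (by exact_mod_cast hq12)
    have hnull : P (⋃ q ∈ G, {ω | (fun n => a n ω) ∈ Pr (arc q)}) = 0 :=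
      (measure_biUnion_null_iff (Set.to_countable G)).mpr fun q hq => hcon q hq
    exact hpos (measure_mono_null hsubset hnull)
  obtain ⟨q, hqG, hqpos⟩ := hsel
  set α : ℝ := (q.1 : ℝ) with hα
  set β : ℝ := (q.1 : ℝ) + (q.2 : ℝ) with hβ
  have hαβ : α < β := by
    have : (0:ℝ) < (q.2 : ℝ) := by exact_mod_cast hqG
    simp only [hα, hβ]
    linarith
  set B : Set (AddCircle (2 * Real.pi)) := arc q with hB
  have hBeq : B = ((↑) : ℝ → AddCircle (2 * Real.pi)) '' Set.Ioo α β := rfl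
  have hBo : IsOpen B := by rw [hBeq]; exact kahane_arc_open α β
  have hBc : IsConnected B := by rw [hBeq]; exact kahane_arc_conn hαβ
  have hBm : MeasurableSet (Pr B) := hBorel B hBo hBc
  have hΦ : Measurable (fun ω (n : ℤ) => a n ω) := measurable_pi_lambda _ hmeas
  set E : Set Ω := {ω | (fun n => a n ω) ∈ Pr B} with hE
  have hEmeas : MeasurableSet E := hΦ hBm
  -- Kolmogorov 0-1 law: P E = 1
  have hE1 : P E = 1 := by
    set s' : ℤ → MeasurableSpace Ω := fun n => MeasurableSpace.comap (a n) inferInstance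
      with hs'
    have h_le : ∀ n, s' n ≤ _ := fun n => (hmeas n).comap_le
    have htail : MeasurableSet[Filter.limsup s' Filter.cofinite] E := by
      rw [Filter.limsup_eq_iInf_iSup]
      rw [MeasurableSpace.measurableSet_iInf]
      intro U
      rw [MeasurableSpace.measurableSet_iInf]
      intro hU
      set M : MeasurableSpace Ω := ⨆ n ∈ U, s' n with hM
      have hcoord : ∀ n ∈ U, Measurable[M] (a n) := by
        intro n hn
        rw [measurable_iff_comap_le]
        exact le_biSup s' hn
      set Ψ : Ω → (ℤ → ℂ) := fun ω n => if n ∈ U then a n ω else 0 with hΨ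
      have hΨmeas : Measurable[M] Ψ := by
        refine measurable_pi_lambda _ fun n => ?_
        by_cases hn : n ∈ U
        · simpa [hΨ, hn] using hcoord n hn
        · simpa [hΨ, hn] using (@measurable_const ℂ Ω _ M 0)
      have hUc : (Uᶜ : Set ℤ).Finite := Filter.mem_cofinite.mp hU
      have hEΨ : E = Ψ ⁻¹' (Pr B) := by
        ext ω
        constructor
        · intro h
          refine hstable B hBo hBc (fun n => a n ω) (Ψ ω) ?_ h
          refine hUc.subset fun n hn => ?_
          simp only [Function.mem_support, hΨ, Set.mem_compl_iff] at hn ⊢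
          intro hnU
          rw [if_pos hnU] at hn
          simp at hn
        · intro h
          refine hstable B hBo hBc (Ψ ω) (fun n => a n ω) ?_ h
          refine hUc.subset fun n hn => ?_
          simp only [Function.mem_support, hΨ, Set.mem_compl_iff] at hn ⊢
          intro hnU
          rw [if_pos hnU] at hn
          simp at hn
      rw [hEΨ]
      exact hΨmeas hBm
    have h01 := measure_zero_or_one_of_measurableSet_limsup (μ := P) (s := s')
      (f := Filter.cofinite) (p := fun t : Set ℤ => t.Finite)
      (ns := fun m : ℕ => Set.Icc (-(m:ℤ)) m) h_le hindep.iIndep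
      (fun t ht => by rwa [Filter.mem_cofinite, compl_compl])
      (Monotone.directed_le fun m m' h => Set.Icc_subset_Icc
        (by exact_mod_cast neg_le_neg (Int.ofNat_le.mpr h)) (by exact_mod_cast h))
      (fun m => Set.finite_Icc _ _)
      (fun n => ⟨n.natAbs, by simp only [Set.mem_Icc]; omega⟩) htail
    rcases h01 with h0 | h1
    · exact absurd h0 hqpos
    · exact h1
  -- choose k with 2π/k < β - α
  have hd : (0:ℝ) < β - α := by linarith
  obtain ⟨k, hkgt⟩ := exists_nat_gt (2 * Real.pi / (β - α))
  have hkposR : (0:ℝ) < k := lt_trans (by positivity) hkgt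
  have hkpos : 0 < k := by exact_mod_cast hkposR
  have hθk : 2 * Real.pi / k < β - α := by
    rw [div_lt_iff₀ hkposR]
    have := (div_lt_iff₀ hd).mp hkgt
    nlinarith
  -- the sign-flipped families
  set c : ℕ → ℤ → Ω → ℂ :=
    fun r n ω => (if (k:ℤ) ∣ (n - (r:ℤ)) then (1:ℂ) else -1) * a n ω with hc
  have hcmeas : ∀ r n, Measurable (c r n) := fun r n => (hmeas n).const_mul _
  have hcindep : ∀ r, iIndepFun (c r) P := by
    intro r
    exact hindep.comp (fun n x => (if (k:ℤ) ∣ (n - (r:ℤ)) then (1:ℂ) else -1) * x)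
      (fun n => measurable_id.const_mul _)
  have hcmarg : ∀ r n, Measure.map (c r n) P = Measure.map (a n) P := by
    intro r n
    by_cases hdvd : (k:ℤ) ∣ (n - (r:ℤ))
    · simp only [hc, hdvd, if_true, one_mul]
    · simp only [hc, hdvd, if_false, neg_one_mul]
      exact (hsymm n).symm
  have hmapeq : ∀ r, Measure.map (fun ω (n : ℤ) => c r n ω) P
      = Measure.map (fun ω (n : ℤ) => a n ω) P := fun r =>
    kahane_map_eq P (c r) a (hcmeas r) hmeas (hcindep r) hindep (hcmarg r)
  set A : ℕ → Set Ω := fun r => (fun ω (n : ℤ) => c r n ω) ⁻¹' (Pr B) with hA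
  have hAmeas : ∀ r, MeasurableSet (A r) := fun r =>
    (measurable_pi_lambda _ (hcmeas r)) hBm
  have hA1 : ∀ r, P (A r) = 1 := by
    intro r
    have hΦc : Measurable (fun ω (n : ℤ) => c r n ω) := measurable_pi_lambda _ (hcmeas r)
    calc P (A r) = Measure.map (fun ω (n : ℤ) => c r n ω) P (Pr B) :=
          (Measure.map_apply hΦc hBm).symm
      _ = Measure.map (fun ω (n : ℤ) => a n ω) P (Pr B) := by rw [hmapeq r]
      _ = P E := Measure.map_apply hΦ hBm
      _ = 1 := hE1
  -- almost sure membership of all the events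
  have haeE : ∀ᵐ ω ∂P, ω ∈ E := by
    rw [ae_iff]
    have hcompl : {ω | ¬ ω ∈ E} = Eᶜ := rfl
    rw [hcompl, prob_compl_eq_zero_iff hEmeas]
    exact hE1
  have haeA : ∀ᵐ ω ∂P, ∀ r : ℕ, ω ∈ A r := by
    rw [MeasureTheory.ae_all_iff]
    intro r
    rw [ae_iff]
    have hcompl : {ω | ¬ ω ∈ A r} = (A r)ᶜ := rfl
    rw [hcompl, prob_compl_eq_zero_iff (hAmeas r)]
    exact hA1 r
  filter_upwards [haeE, haeA] with ω hωE hωA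
  -- decompose into residue classes
  set F : ℕ → (ℤ → ℂ) := fun r n => if (k:ℤ) ∣ (n - (r:ℤ)) then a n ω else 0 with hF
  have hFB : ∀ r, F r ∈ Pr B := by
    intro r
    have hFr : F r = (2⁻¹ : ℂ) • ((fun n => a n ω) + (fun n => c r n ω)) := by
      funext n
      simp only [hF, hc, Pi.smul_apply, Pi.add_apply, smul_eq_mul]
      by_cases hdvd : (k:ℤ) ∣ (n - (r:ℤ))
      · rw [if_pos hdvd, if_pos hdvd]
        ring
      · rw [if_neg hdvd, if_neg hdvd]
        ring
    rw [hFr]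
    exact hsmul B hBo hBc _ _ (hadd B hBo hBc _ _ hωE (hωA r))
  have hFuniv : ∀ r, F r ∈ Pr Set.univ := by
    intro r
    refine kahane_resclass Pr hsmul hcover hrot hαβ k hkpos hθk (r:ℤ) (F r) ?_ ?_
    · intro n hn
      by_contra hdvd
      simp only [hF, if_neg hdvd] at hn
      exact hn rfl
    · rw [← hBeq]
      exact hFB r
  -- sum over residue classes
  have hsum : (fun n => a n ω) = ∑ r ∈ Finset.range k, F r := by
    funext n
    rw [Finset.sum_apply]
    have hknz : (k:ℤ) ≠ 0 := by exact_mod_cast hkpos.ne'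
    have hmod_nonneg : 0 ≤ n % (k:ℤ) := Int.emod_nonneg n hknz
    have hmod_lt : n % (k:ℤ) < k := Int.emod_lt_of_pos n (by exact_mod_cast hkpos)
    set r0 : ℕ := (n % (k:ℤ)).toNat with hr0
    have hr0cast : (r0:ℤ) = n % (k:ℤ) := Int.toNat_of_nonneg hmod_nonneg
    have hr0k : r0 < k := by omega
    have hdvd0 : (k:ℤ) ∣ n - (r0:ℤ) := by
      refine ⟨n / (k:ℤ), ?_⟩
      rw [hr0cast, Int.emod_def]
      ring
    rw [Finset.sum_eq_single_of_mem r0 (Finset.mem_range.mpr hr0k)]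
    · simp only [hF, if_pos hdvd0]
    · intro b hb hbne
      simp only [hF]
      refine if_neg fun hdvdb => hbne ?_
      have h1 : (k:ℤ) ∣ ((r0:ℤ) - b) := by
        have hsub := dvd_sub hdvdb hdvd0
        have heq : (n - (b:ℤ)) - (n - (r0:ℤ)) = (r0:ℤ) - b := by ring
        rwa [heq] at hsub
      have hbk : (b:ℤ) < k := by exact_mod_cast Finset.mem_range.mp hb
      have hr0k' : (r0:ℤ) < k := by exact_mod_cast hr0k
      have habs : |(r0:ℤ) - b| < (k:ℤ) := by
        rw [abs_lt]
        omega
      have hzero := Int.eq_zero_of_abs_lt_dvd h1 habs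
      omega
  rw [hsum]
  exact Finset.sum_induction F (· ∈ Pr Set.univ)
    (fun f g hf hg => hadd Set.univ isOpen_univ kahane_univ_conn f g hf hg)
    (hfin Set.univ isOpen_univ kahane_univ_conn 0 (by simp))
    (fun r _ => hFuniv r)
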